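/- arXiv:math/0605243 — 2 statements merged into one kernel-verified Lean document; each statement's English description precedes it below -/
import Mathlib

section
/- If A and B are positive semi-definite operators on a finite-dimensional real inner product space, then the parallel sum operator 2A(A+B)⁺B is positive semi-definite. -/
/-- `G` is the Moore-Penrose pseudo-inverse of `L` (Penrose conditions;
adjoint-symmetry of `L ∘ G` and `G ∘ L` expressed via `IsSymmetric`). -/
def IsMoorePenrose {V : Type*} [NormedAddCommGroup V] [InnerProductSpace ℝ V]
    (L G : V →ₗ[ℝ] V) : Prop :=
  L ∘ₗ (G ∘ₗ L) = L ∧ G ∘ₗ (L ∘ₗ G) = G ∧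
  (L ∘ₗ G).IsSymmetric ∧ (G ∘ₗ L).IsSymmetric

lemma psd_inner_zero {V : Type*} [NormedAddCommGroup V] [InnerProductSpace ℝ V]
    (A : V →ₗ[ℝ] V) (hA : A.IsSymmetric) (hpsd : ∀ x : V, 0 ≤ (inner ℝ x (A x) : ℝ))
    (z : V) (hz : (inner ℝ z (A z) : ℝ) = 0) : A z = 0 := by
  set a : ℝ := ‖A z‖ ^ 2 with ha
  set b : ℝ := inner ℝ (A z) (A (A z)) with hb
  have hb0 : 0 ≤ b := hpsd (A z)
  have key : ∀ t : ℝ, 0 ≤ 2 * t * a + t ^ 2 * b := by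
    intro t
    have h := hpsd (z + t • A z)
    have e1 : (inner ℝ z (A (A z)) : ℝ) = inner ℝ (A z) (A z) := (hA z (A z)).symm
    simp only [map_add, map_smul, inner_add_left, inner_add_right,
      real_inner_smul_left, real_inner_smul_right, hz] at h
    rw [e1] at h
    have e2 : ‖A z‖ ^ 2 = (inner ℝ (A z) (A z) : ℝ) := (real_inner_self_eq_norm_sq _).symm
    rw [ha, e2, hb]
    nlinarith [h]
  have ha0 : 0 ≤ a := by positivity
  have : a = 0 := by
    by_contra hne
    have hapos : 0 < a := lt_of_le_of_ne ha0 (Ne.symm hne)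
    have := key (-a / (b + 1))
    have hb1 : 0 < b + 1 := by linarith
    have : 0 ≤ 2 * (-a / (b + 1)) * a + (-a / (b + 1)) ^ 2 * b := this
    rw [div_pow, neg_pow] at this
    have h2 : 0 ≤ (-2 * a ^ 2 * (b + 1) + a ^ 2 * b) / (b + 1) ^ 2 := by
      rw [add_div]
      convert this using 2 <;> field_simp <;> ring
    have h3 : 0 ≤ -2 * a ^ 2 * (b + 1) + a ^ 2 * b := by
      have := mul_nonneg h2 (le_of_lt (pow_pos hb1 2))
      calc -2 * a ^ 2 * (b + 1) + a ^ 2 * b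
          = (-2 * a ^ 2 * (b + 1) + a ^ 2 * b) / (b + 1) ^ 2 * (b + 1) ^ 2 := by
            field_simp
        _ ≥ 0 := this
    nlinarith
  have : ‖A z‖ = 0 := by
    have := this
    rw [ha] at this
    nlinarith [norm_nonneg (A z)]
  exact norm_eq_zero.mp this

theorem parallelSum_psd {V : Type*} [NormedAddCommGroup V] [InnerProductSpace ℝ V]
    [FiniteDimensional ℝ V] (A B : V →ₗ[ℝ] V)
    (hA : A.IsSymmetric) (hB : B.IsSymmetric)
    (hApsd : ∀ x : V, 0 ≤ (inner ℝ x (A x) : ℝ)) (hBpsd : ∀ x : V, 0 ≤ (inner ℝ x (B x) : ℝ))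
    (G : V →ₗ[ℝ] V) (hG : IsMoorePenrose (A + B) G) :
    ∀ x : V, 0 ≤ (inner ℝ x (((2 : ℝ) • (A ∘ₗ (G ∘ₗ B))) x) : ℝ) := by
  obtain ⟨h1, h2, h3, h4⟩ := hG
  set S : V →ₗ[ℝ] V := A + B with hS
  have hSsym : S.IsSymmetric := hA.add hB
  have hSpsd : ∀ x : V, 0 ≤ (inner ℝ x (S x) : ℝ) := by
    intro x
    have := add_nonneg (hApsd x) (hBpsd x)
    simpa [hS, inner_add_right] using this
  -- P = S ∘ G fixes range of S, idempotent
  have hPS : ∀ w : V, S (G (S w)) = S w := fun w => congrFun (congrArg DFunLike.coe h1) w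
  have hPP : ∀ u : V, S (G (S (G u))) = S (G u) := fun u => hPS (G u)
  -- P fixes B v
  have hPB : ∀ v : V, S (G (B v)) = B v := by
    intro v
    set z : V := B v - S (G (B v)) with hz
    have hzS : ∀ w : V, (inner ℝ z (S w) : ℝ) = 0 := by
      intro w
      have : (inner ℝ (S (G (B v))) (S w) : ℝ) = inner ℝ (B v) (S w) := by
        have := h3 (B v) (S w)
        simpa [LinearMap.comp_apply, hPS w] using this
      simp [hz, inner_sub_left, this]
    have hzSz : (inner ℝ z (S z) : ℝ) = 0 := hzS z
    have hzA : (inner ℝ z (A z) : ℝ) = 0 := by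
      have hsum : (inner ℝ z (A z) : ℝ) + inner ℝ z (B z) = 0 := by
        rw [← inner_add_right]; simpa [hS] using hzSz
      have := hApsd z; have := hBpsd z; linarith
    have hzB : (inner ℝ z (B z) : ℝ) = 0 := by
      have hsum : (inner ℝ z (A z) : ℝ) + inner ℝ z (B z) = 0 := by
        rw [← inner_add_right]; simpa [hS] using hzSz
      have := hApsd z; have := hBpsd z; linarith
    have hAz : A z = 0 := psd_inner_zero A hA hApsd z hzA
    have hBz : B z = 0 := psd_inner_zero B hB hBpsd z hzB
    have hz0 : z = 0 := by
      have h5 : (inner ℝ z (B v) : ℝ) = 0 := by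
        rw [← hB z v, hBz]; simp
      have h6 : (inner ℝ z (S (G (B v))) : ℝ) = 0 := by
        have hPz : S (G z) = 0 := by
          have : S (G z) = S (G (B v)) - S (G (S (G (B v)))) := by
            simp [hz, map_sub]
          rw [this, hPP (B v), sub_self]
        have := h3 z (S (G (B v)))
        simp only [LinearMap.comp_apply] at this
        rw [hPS (G (B v))] at this
        rw [← this]
        have hsym2 := h3 (G z) (B v)  -- unused; direct route:
        calc (inner ℝ (S (G z)) (S (G (B v))) : ℝ) = inner ℝ (0 : V) (S (G (B v))) := by rw [hPz]
          _ = 0 := by simp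
      have : (inner ℝ z z : ℝ) = 0 := by
        have : (inner ℝ z z : ℝ) = inner ℝ z (B v) - inner ℝ z (S (G (B v))) := by
          rw [← inner_sub_right, ← hz]
        rw [this, h5, h6, sub_zero]
      exact inner_self_eq_zero.mp this
    exact (sub_eq_zero.mp (hz.symm.trans hz0)).symm
  intro x
  set y : V := G (B x) with hy
  have hSy : S y = B x := hPB x
  have hAy : A y = B (x - y) := by
    have : A y + B y = B x := by simpa [hS] using hSy
    rw [map_sub, ← this]; abel
  have expand : (inner ℝ x (((2 : ℝ) • (A ∘ₗ (G ∘ₗ B))) x) : ℝ) = 2 * inner ℝ x (A y) := by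
    simp [LinearMap.smul_apply, LinearMap.comp_apply, real_inner_smul_right, hy]
  rw [expand]
  have : (inner ℝ x (A y) : ℝ) = inner ℝ (x - y) (B (x - y)) + inner ℝ y (A y) := by
    have e1 : (inner ℝ x (A y) : ℝ) = inner ℝ (x - y) (A y) + inner ℝ y (A y) := by
      rw [← inner_add_left]; rw [sub_add_cancel]
    rw [e1, hAy]
  rw [this]
  have := hBpsd (x - y); have := hApsd y
  linarith
end

section
/- If A and B are positive semi-definite operators on a finite-dimensional real inner product space, then Range(A(A+B)⁺B) = Range(A) ∩ Range(B). -/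
/-- A symmetric psd operator with vanishing quadratic form at `x` kills `x`. -/
lemma psd_apply_eq_zero {V : Type*} [NormedAddCommGroup V] [InnerProductSpace ℝ V]
    (A : V →ₗ[ℝ] V) (hA : A.IsSymmetric) (hApsd : ∀ x : V, 0 ≤ (inner ℝ x (A x) : ℝ))
    (x : V) (h : (inner ℝ x (A x) : ℝ) = 0) : A x = 0 := by
  set n : ℝ := ‖A x‖ ^ 2 with hn_def
  set c : ℝ := inner ℝ (A x) (A (A x)) with hc_def
  have hc : 0 ≤ c := hApsd (A x)
  have hn : 0 ≤ n := sq_nonneg _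
  have key : ∀ t : ℝ, 0 ≤ 2 * t * n + t ^ 2 * c := by
    intro t
    have h0 := hApsd (x + t • A x)
    have e2 : (inner ℝ x (A (A x)) : ℝ) = inner ℝ (A x) (A x) := (hA x (A x)).symm
    have e3 : (inner ℝ (A x) (A x) : ℝ) = n := real_inner_self_eq_norm_sq (A x)
    have e1 : (inner ℝ (x + t • A x) (A (x + t • A x)) : ℝ)
        = 2 * t * n + t ^ 2 * c := by
      rw [map_add, map_smul]
      rw [inner_add_left, inner_add_right, inner_add_right,
        real_inner_smul_left, real_inner_smul_left, real_inner_smul_right,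
        real_inner_smul_right, h, e2, e3, hc_def]
      ring
    rw [e1] at h0
    exact h0
  have hkey := key (-(n / (c + 1)))
  have hcpos : (0 : ℝ) < c + 1 := by linarith
  have hn0 : n = 0 := by
    have h1 : 2 * (-(n / (c + 1))) * n + (-(n / (c + 1))) ^ 2 * c
        = -(n ^ 2 * (c + 2)) / (c + 1) ^ 2 := by
      field_simp
      ring
    rw [h1] at hkey
    have h3 := mul_nonneg hkey (le_of_lt (pow_pos hcpos 2))
    rw [div_mul_cancel₀ _ (ne_of_gt (pow_pos hcpos 2))] at h3
    nlinarith
  have : ‖A x‖ = 0 := by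
    have := pow_eq_zero_iff (n := 2) (by norm_num) |>.mp hn0
    exact this
  simpa using this

theorem parallelSum_range {V : Type*} [NormedAddCommGroup V] [InnerProductSpace ℝ V]
    [FiniteDimensional ℝ V] (A B : V →ₗ[ℝ] V)
    (hA : A.IsSymmetric) (hB : B.IsSymmetric)
    (hApsd : ∀ x : V, 0 ≤ (inner ℝ x (A x) : ℝ)) (hBpsd : ∀ x : V, 0 ≤ (inner ℝ x (B x) : ℝ))
    (G : V →ₗ[ℝ] V) (hG : IsMoorePenrose (A + B) G) :
    LinearMap.range (A ∘ₗ (G ∘ₗ B)) = LinearMap.range A ⊓ LinearMap.range B := by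
  obtain ⟨h1, h2, h3, h4⟩ := hG
  set S : V →ₗ[ℝ] V := A + B with hS
  have hSsym : S.IsSymmetric := hA.add hB
  have hSapp : ∀ x, S x = A x + B x := fun x => rfl
  -- pointwise Penrose 1
  have h1' : ∀ x, S (G (S x)) = S x := by
    intro x
    have := LinearMap.ext_iff.mp h1 x
    simpa using this
  -- kernel of S is contained in kernels of A and B
  have hker : ∀ x, S x = 0 → A x = 0 ∧ B x = 0 := by
    intro x hx
    have hsum : (inner ℝ x (A x) : ℝ) + (inner ℝ x (B x) : ℝ) = 0 := by
      have : (inner ℝ x (S x) : ℝ) = 0 := by rw [hx, inner_zero_right]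
      rw [hSapp, inner_add_right] at this
      linarith
    have hA0 : (inner ℝ x (A x) : ℝ) = 0 := le_antisymm (by linarith [hBpsd x]) (hApsd x)
    have hB0 : (inner ℝ x (B x) : ℝ) = 0 := by linarith
    exact ⟨psd_apply_eq_zero A hA hApsd x hA0, psd_apply_eq_zero B hB hBpsd x hB0⟩
  -- A ∘ G ∘ S = A   (and similarly for B)
  have hQker : ∀ z, S (z - G (S z)) = 0 := by
    intro z
    rw [map_sub, h1', sub_self]
  have hAGS : ∀ z, A (G (S z)) = A z := by
    intro z
    have := (hker _ (hQker z)).1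
    rw [map_sub, sub_eq_zero] at this
    exact this.symm
  -- (1 - SG) z is orthogonal to range S
  have hperp : ∀ z v, (inner ℝ (z - S (G z)) (S v) : ℝ) = 0 := by
    intro z v
    rw [inner_sub_left]
    have := h3 z (S v)
    simp only [LinearMap.comp_apply] at this
    rw [this, h1', sub_self]
  -- S (z - S (G z)) = 0
  have hSw : ∀ z, S (z - S (G z)) = 0 := by
    intro z
    set w := z - S (G z) with hw
    have h0 : (inner ℝ (S w) (S w) : ℝ) = 0 := by
      rw [hSsym w (S w)]
      exact hperp z (S w)
    exact inner_self_eq_zero.mp h0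
  -- S ∘ G acts as identity on range B (and range A)
  have hSGid : ∀ (T : V →ₗ[ℝ] V), T.IsSymmetric → (∀ x, S x = 0 → T x = 0) →
      ∀ z, S (G (T z)) = T z := by
    intro T hT hTk z
    have hw0 : S (T z - S (G (T z))) = 0 := hSw (T z)
    have hTw : T (T z - S (G (T z))) = 0 := hTk _ hw0
    have e1 : (inner ℝ (T z - S (G (T z))) (T z) : ℝ) = 0 := by
      rw [← hT (T z - S (G (T z))) z, hTw, inner_zero_left]
    have e2 : (inner ℝ (T z - S (G (T z))) (S (G (T z))) : ℝ) = 0 :=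
      hperp (T z) (G (T z))
    have hww : (inner ℝ (T z - S (G (T z))) (T z - S (G (T z))) : ℝ) = 0 := by
      rw [inner_sub_right, e1, e2, sub_zero]
    have h0 : T z - S (G (T z)) = 0 := inner_self_eq_zero.mp hww
    rw [sub_eq_zero] at h0
    exact h0.symm
  have hSGB : ∀ z, S (G (B z)) = B z :=
    hSGid B hB (fun x hx => (hker x hx).2)
  -- now the range equality
  apply le_antisymm
  · rintro y ⟨x, rfl⟩
    simp only [LinearMap.comp_apply]
    constructor
    · exact ⟨G (B x), rfl⟩
    · -- A (G (B x)) = B (x - G (B x))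
      refine ⟨x - G (B x), ?_⟩
      have : A (G (B x)) + B (G (B x)) = B x := by
        have := hSGB x
        rw [hSapp] at this
        exact this
      rw [map_sub]
      exact (eq_sub_of_add_eq this).symm
  · rintro y ⟨⟨u, hu⟩, ⟨v, hv⟩⟩
    refine ⟨u + v, ?_⟩
    simp only [LinearMap.comp_apply, map_add]
    have hBu : B u = S u - A u := by rw [hSapp]; abel
    have e1 : A (G (B u)) = y - A (G y) := by
      rw [hBu, map_sub, map_sub, hAGS, hu]
    have e2 : A (G (B v)) = A (G y) := by rw [hv]
    rw [e1, e2]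
    abel
end
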